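/- There exists a uniform element-based generation algorithm f (a function taking a countable collection X of languages and a finite sequence of strings, and returning a string) such that for every countable collection X, every K ∈ X, and every enumeration E of K: f achieves element-based generation in the limit on E, and μ_low(O(E, f), K) ≥ 1/8. -/

import Mathlib

/-- The finite prefix `[E 0, …, E t]` of the adversary's enumeration. -/
def epref (E : ℕ → ℕ) (t : ℕ) : List ℕ := (List.range (t + 1)).map E

/-- `E` is an enumeration of the language `K`. -/
def IsEnum (E : ℕ → ℕ) (K : Set ℕ) : Prop := Function.Injective E ∧ Set.range E = K

/-- The lower density of `L` in the infinite set `K`: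
`liminf_{N→∞} |L ∩ {k_1,…,k_N}| / N`, where `k_1 < k_2 < ⋯` lists `K` in
increasing order. -/
noncomputable def lowerDensity (L K : Set ℕ) : ℝ :=
  Filter.liminf
    (fun N : ℕ => ((Set.ncard {n : ℕ | n < N ∧ Nat.nth (· ∈ K) n ∈ L}) : ℝ) / N)
    Filter.atTop

namespace GenDen

variable (L : ℕ → Set ℕ)

def consistentL (i : ℕ) (p : List ℕ) : Prop := ∀ x ∈ p, x ∈ L i

def criticalL (i : ℕ) (p : List ℕ) : Prop :=
  consistentL L i p ∧ ∀ j < i, consistentL L j p → L i ⊆ L j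

def predL (p : List ℕ) (i : ℕ) : Prop :=
  ∀ s, Nat.log 2 p.length ≤ s → s ≤ p.length → criticalL L i (p.take s)

noncomputable def selL (p : List ℕ) : ℕ :=
  @Nat.findGreatest (predL L p) (Classical.decPred _) (Nat.log 2 p.length)

noncomputable def gen (p : List ℕ) : ℕ :=
  sInf (L (selL L p) \ ({x | x ∈ p} ∪ {x | ∃ m, ∃ _ : m < p.length, gen (p.take m) = x}))
termination_by p.length
decreasing_by simp [List.length_take]; omega

end GenDen

section Inst

open GenDen

variable (L : ℕ → Set ℕ) (E : ℕ → ℕ)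

def pfx (n : ℕ) : List ℕ := (List.range n).map E

lemma pfx_length (n : ℕ) : (pfx E n).length = n := by simp [pfx]

lemma pfx_take (s n : ℕ) (h : s ≤ n) : (pfx E n).take s = pfx E s := by
  simp [pfx, ← List.map_take, List.take_range, Nat.min_eq_left h]

lemma mem_pfx {x n : ℕ} : x ∈ pfx E n ↔ ∃ s < n, E s = x := by
  simp [pfx, eq_comm]

noncomputable def outF (n : ℕ) : ℕ := gen L (pfx E n)

noncomputable def selF (n : ℕ) : ℕ := selL L (pfx E n)

def Sset (n : ℕ) : Set ℕ := {x | ∃ s < n, E s = x}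

def Oset (n : ℕ) : Set ℕ := {x | ∃ m < n, outF L E m = x}

lemma outF_eq (n : ℕ) :
    outF L E n = sInf (L (selF L E n) \ (Sset E n ∪ Oset L E n)) := by
  rw [outF, gen]
  have hset : ({x | x ∈ pfx E n} ∪ {x | ∃ m, ∃ _ : m < (pfx E n).length, gen L ((pfx E n).take m) = x})
      = (Sset E n ∪ Oset L E n) := by
    ext x
    simp only [Set.mem_union, Set.mem_setOf_eq, mem_pfx, pfx_length, Sset, Oset]
    constructor
    · rintro (h | ⟨m, hm, rfl⟩)
      · exact Or.inl h
      · exact Or.inr ⟨m, hm, by rw [outF, pfx_take E m n hm.le]⟩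
    · rintro (h | ⟨m, hm, rfl⟩)
      · exact Or.inl h
      · exact Or.inr ⟨m, hm, by rw [outF, pfx_take E m n hm.le]⟩
  rw [hset]
  rfl

/-- consistency at time `n` (n = number of seen values) -/
def consF (i n : ℕ) : Prop := Sset E n ⊆ L i

lemma consistentL_pfx_iff {i n : ℕ} : consistentL L i (pfx E n) ↔ consF L E i n := by
  constructor
  · intro h x ⟨s, hs, hEs⟩
    exact h x (by rw [mem_pfx]; exact ⟨s, hs, hEs⟩)
  · intro h x hx
    rw [mem_pfx] at hx
    exact h (hx.elim fun s hs => ⟨s, hs.1, hs.2⟩)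

def critF (i n : ℕ) : Prop := consF L E i n ∧ ∀ j < i, consF L E j n → L i ⊆ L j

lemma criticalL_pfx_iff {i n : ℕ} : criticalL L i (pfx E n) ↔ critF L E i n := by
  unfold criticalL critF
  rw [consistentL_pfx_iff]
  constructor
  · rintro ⟨h1, h2⟩
    exact ⟨h1, fun j hj hc => h2 j hj ((consistentL_pfx_iff L E).2 hc)⟩
  · rintro ⟨h1, h2⟩
    exact ⟨h1, fun j hj hc => h2 j hj ((consistentL_pfx_iff L E).1 hc)⟩

/-- the window predicate at time `n` -/
def predF (n i : ℕ) : Prop := ∀ s, Nat.log 2 n ≤ s → s ≤ n → critF L E i s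

lemma predL_pfx_iff {i n : ℕ} : predL L (pfx E n) i ↔ predF L E n i := by
  unfold predL predF
  rw [pfx_length]
  constructor
  · intro h s h1 h2
    have := h s h1 h2
    rwa [pfx_take E s n h2, criticalL_pfx_iff] at this
  · intro h s h1 h2
    rw [pfx_take E s n h2, criticalL_pfx_iff]
    exact h s h1 h2

end Inst

lemma findGreatest_congr {P Q : ℕ → Prop} [DecidablePred P] [DecidablePred Q]
    (h : ∀ n, P n ↔ Q n) (b : ℕ) : Nat.findGreatest P b = Nat.findGreatest Q b := by
  induction b with
  | zero => rfl
  | succ b ih =>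
    rw [Nat.findGreatest_succ, Nat.findGreatest_succ, ih]
    by_cases hp : P (b + 1)
    · rw [if_pos hp, if_pos ((h _).1 hp)]
    · rw [if_neg hp, if_neg (fun hq => hp ((h _).2 hq))]

lemma selF_eq (L : ℕ → Set ℕ) (E : ℕ → ℕ) (n : ℕ) :
    selF L E n = @Nat.findGreatest (predF L E n) (Classical.decPred _) (Nat.log 2 n) := by
  rw [selF, GenDen.selL, pfx_length]
  exact @findGreatest_congr _ _ (Classical.decPred _) (Classical.decPred _)
    (fun i => by rw [predL_pfx_iff]) _

section Valid

open GenDen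

variable {L : ℕ → Set ℕ} {E : ℕ → ℕ} {z : ℕ}

lemma Sset_subset_K (hEr : Set.range E = L z) (n : ℕ) : Sset E n ⊆ L z := by
  rintro x ⟨s, _, rfl⟩
  rw [← hEr]; exact ⟨s, rfl⟩

lemma Sset_mono {m n : ℕ} (h : m ≤ n) : Sset E m ⊆ Sset E n := by
  rintro x ⟨s, hs, rfl⟩; exact ⟨s, lt_of_lt_of_le hs h, rfl⟩

lemma Sset_finite (n : ℕ) : (Sset E n).Finite := by
  have : Sset E n = E '' (Set.Iio n) := by
    ext x; constructor
    · rintro ⟨s, hs, rfl⟩; exact ⟨s, hs, rfl⟩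
    · rintro ⟨s, hs, rfl⟩; exact ⟨s, hs, rfl⟩
  rw [this]; exact (Set.finite_Iio n).image E

lemma Oset_finite (L : ℕ → Set ℕ) (E : ℕ → ℕ) (n : ℕ) : (Oset L E n).Finite := by
  have : Oset L E n = (outF L E) '' (Set.Iio n) := by
    ext x; constructor
    · rintro ⟨m, hm, rfl⟩; exact ⟨m, hm, rfl⟩
    · rintro ⟨m, hm, rfl⟩; exact ⟨m, hm, rfl⟩
  rw [this]; exact (Set.finite_Iio n).image _

/-- kill time: past this time, consistency of `L j` implies `range E ⊆ L j`. -/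
noncomputable def killT (L : ℕ → Set ℕ) (E : ℕ → ℕ) (j : ℕ) : ℕ :=
  @dite _ (∃ s, E s ∉ L j) (Classical.dec _) (fun h => h.choose + 1) (fun _ => 0)

lemma killT_spec (hEr : Set.range E = L z) {j n : ℕ} (h : killT L E j ≤ n)
    (hc : consF L E j n) : L z ⊆ L j := by
  intro x hx
  rw [← hEr] at hx
  obtain ⟨s, rfl⟩ := hx
  by_contra hxj
  have hex : ∃ s, E s ∉ L j := ⟨s, hxj⟩
  have hchoose := hex.choose_spec
  rw [killT, dif_pos hex] at h
  exact hchoose (hc ⟨hex.choose, by omega, rfl⟩)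

/-- time after which the true index `z` is critical forever -/
noncomputable def tOne (L : ℕ → Set ℕ) (E : ℕ → ℕ) (z : ℕ) : ℕ :=
  (Finset.range z).sup (fun j => killT L E j)

lemma crit_z (hEr : Set.range E = L z) (n : ℕ) (hn : tOne L E z ≤ n) : critF L E z n := by
  refine ⟨Sset_subset_K hEr n, fun j hj hc => ?_⟩
  refine killT_spec hEr (le_trans ?_ hn) hc
  exact Finset.le_sup (Finset.mem_range.mpr hj)

/-- the validity threshold -/
noncomputable def nstar (L : ℕ → Set ℕ) (E : ℕ → ℕ) (z : ℕ) : ℕ :=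
  2 ^ (max (tOne L E z) z + 1)

lemma log_ge_of_nstar {n : ℕ} (hn : nstar L E z ≤ n) :
    max (tOne L E z) z + 1 ≤ Nat.log 2 n := by
  rw [nstar] at hn
  have hn0 : n ≠ 0 := by
    intro h; rw [h] at hn
    exact absurd hn (Nat.pos_of_ne_zero (by positivity : (2:ℕ) ^ (max (tOne L E z) z + 1) ≠ 0)).not_ge
  exact (Nat.le_log_iff_pow_le one_lt_two hn0).2 hn

lemma predF_z (hEr : Set.range E = L z) {n : ℕ} (hn : nstar L E z ≤ n) : predF L E n z := by
  intro s h1 h2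
  refine crit_z hEr s ?_
  have := log_ge_of_nstar (L := L) (E := E) (z := z) hn
  omega

lemma z_le_log {n : ℕ} (hn : nstar L E z ≤ n) : z ≤ Nat.log 2 n := by
  have := log_ge_of_nstar (L := L) (E := E) (z := z) hn
  omega

lemma z_le_selF (hEr : Set.range E = L z) {n : ℕ} (hn : nstar L E z ≤ n) :
    z ≤ selF L E n := by
  rw [selF_eq]
  exact @Nat.le_findGreatest z (predF L E n) (Classical.decPred _) _ (z_le_log hn) (predF_z hEr hn)

lemma predF_selF (hEr : Set.range E = L z) {n : ℕ} (hn : nstar L E z ≤ n) :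
    predF L E n (selF L E n) := by
  have h := @Nat.findGreatest_spec z (predF L E n) (Classical.decPred _) _
    (z_le_log hn) (predF_z hEr hn)
  rwa [← selF_eq] at h

lemma selF_le_log (L : ℕ → Set ℕ) (E : ℕ → ℕ) (n : ℕ) : selF L E n ≤ Nat.log 2 n := by
  rw [selF_eq]
  exact @Nat.findGreatest_le (predF L E n) (Classical.decPred _) _

lemma critF_selF (hEr : Set.range E = L z) {n : ℕ} (hn : nstar L E z ≤ n) :
    critF L E (selF L E n) n :=
  predF_selF hEr hn n (Nat.log_le_self 2 n) (le_refl n)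

lemma selF_subset_K (hEr : Set.range E = L z) {n : ℕ} (hn : nstar L E z ≤ n) :
    L (selF L E n) ⊆ L z := by
  rcases eq_or_lt_of_le (z_le_selF hEr hn) with h | h
  · rw [← h]
  · exact (critF_selF hEr hn).2 z h (Sset_subset_K hEr n)

lemma outF_mem (hinf : ∀ i, (L i).Infinite) {n : ℕ} :
    outF L E n ∈ L (selF L E n) \ (Sset E n ∪ Oset L E n) := by
  rw [outF_eq]
  refine Nat.sInf_mem ?_
  exact Set.Infinite.nonempty
    (((hinf (selF L E n))).diff ((Sset_finite n).union (Oset_finite L E n)))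

end Valid

section Assemble

open GenDen

lemma validity_part (L : ℕ → Set ℕ) (hinf : ∀ i, (L i).Infinite) (z : ℕ) (E : ℕ → ℕ)
    (hE : IsEnum E (L z)) :
    ∃ tstar : ℕ, ∀ t ≥ tstar,
      gen L (epref E t) ∈ L z ∧ ∀ s ≤ t, E s ≠ gen L (epref E t) := by
  obtain ⟨hEinj, hEr⟩ := hE
  refine ⟨nstar L E z, fun t ht => ?_⟩
  have hn : nstar L E z ≤ t + 1 := le_trans ht (Nat.le_succ t)
  have hepref : gen L (epref E t) = outF L E (t + 1) := rfl
  have hmem := outF_mem (L := L) (E := E) hinf (n := t + 1)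
  constructor
  · rw [hepref]
    exact selF_subset_K hEr hn hmem.1
  · intro s hs
    rw [hepref]
    intro hcontra
    exact hmem.2 (Or.inl ⟨s, by omega, hcontra⟩)

end Assemble

section Death

open GenDen

variable {L : ℕ → Set ℕ} {E : ℕ → ℕ} {z : ℕ}

/-- death time of index `p`: first time it becomes inconsistent -/
noncomputable def dth (L : ℕ → Set ℕ) (E : ℕ → ℕ) (p : ℕ) : ℕ :=
  sInf {m | ¬ consF L E p m}

lemma consF_antitone {p m n : ℕ} (h : m ≤ n) (hc : consF L E p n) : consF L E p m :=
  fun x hx => hc (Sset_mono h hx)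

lemma consF_zero (p : ℕ) : consF L E p 0 := by
  rintro x ⟨s, hs, _⟩; omega

lemma dth_le {p m : ℕ} (h : ¬ consF L E p m) : dth L E p ≤ m := Nat.sInf_le h

lemma not_consF_dth {p m : ℕ} (h : ¬ consF L E p m) : ¬ consF L E p (dth L E p) :=
  Nat.sInf_mem (⟨m, h⟩ : {m | ¬ consF L E p m}.Nonempty)

lemma consF_of_lt_dth {p m : ℕ} (h : m < dth L E p) : consF L E p m := by
  by_contra hc
  exact absurd (dth_le hc) (by omega)

lemma not_consF_of_dth_le {p m n : ℕ} (hw : ¬ consF L E p n) (h : dth L E p ≤ m) :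
    ¬ consF L E p m :=
  fun hc => not_consF_dth hw (consF_antitone h hc)

lemma dth_pos {p n : ℕ} (hw : ¬ consF L E p n) : 1 ≤ dth L E p := by
  by_contra h
  have h0 : dth L E p = 0 := by omega
  exact (not_consF_dth hw) (h0 ▸ consF_zero p)

/-- THE CAP LEMMA: if `p` is below the current selection and already dead at `n`,
then `p` died no later than `log₂ n`. -/
lemma cap (hEr : Set.range E = L z) {p n : ℕ} (hn : nstar L E z ≤ n)
    (hp : p < selF L E n) (hdead : ¬ consF L E p n) :
    dth L E p ≤ Nat.log 2 n := by
  by_contra hlog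
  push_neg at hlog
  have hd_le : dth L E p ≤ n := dth_le hdead
  have hd1 : 1 ≤ dth L E p := dth_pos hdead
  have hwin : critF L E (selF L E n) (dth L E p - 1) :=
    predF_selF hEr hn (dth L E p - 1) (by omega) (by omega)
  have hconsp : consF L E p (dth L E p - 1) := consF_of_lt_dth (by omega)
  have hsub : L (selF L E n) ⊆ L p := hwin.2 p hp hconsp
  have hkill : ¬ consF L E p (dth L E p) := not_consF_dth hdead
  unfold consF at hkill
  rw [Set.not_subset] at hkill
  obtain ⟨x, hx1, hx2⟩ := hkill
  have hxn : x ∈ Sset E n := Sset_mono hd_le hx1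
  have hxsel : x ∈ L (selF L E n) := (critF_selF hEr hn).1 hxn
  exact hx2 (hsub hxsel)

/-- CAP corollary: selection is strictly below any recently-dead index. -/
lemma sel_lt_of_dead (hEr : Set.range E = L z) {p n : ℕ} (hn : nstar L E z ≤ n)
    (hdead : ¬ consF L E p n) (hlog : Nat.log 2 n < dth L E p) :
    selF L E n < p := by
  have h1 : ¬ (p < selF L E n) := fun hp => absurd (cap hEr hn hp hdead) (by omega)
  have h2 : selF L E n ≠ p := by
    intro h
    exact hdead (h ▸ (critF_selF hEr hn).1)
  omega

end Death

section Count

open GenDen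

/-- all outputs of the generator (as in the theorem statement) -/
noncomputable def OInf (L : ℕ → Set ℕ) (E : ℕ → ℕ) : Set ℕ := {x | ∃ t : ℕ, outF L E (t + 1) = x}

/-- enumeration of `K = L z` in increasing order -/
noncomputable def nthK (L : ℕ → Set ℕ) (z : ℕ) : ℕ → ℕ := Nat.nth (· ∈ L z)

/-- reveal time of a value -/
noncomputable def rv (E : ℕ → ℕ) (x : ℕ) : ℕ := sInf {s | E s = x}

/-- analysis threshold for scale `N` -/
noncomputable def nZero (L : ℕ → Set ℕ) (E : ℕ → ℕ) (z N : ℕ) : ℕ :=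
  max (nstar L E z) (Nat.log 2 (N + 1) + 3)

/-- `m` is the rank of a "lost" element at scale `N` (relevant for the analysis) -/
def islost (L : ℕ → Set ℕ) (E : ℕ → ℕ) (z N m : ℕ) : Prop :=
  m < N ∧ nthK L z m ∉ OInf L E ∧ nZero L E z N ≤ rv E (nthK L z m) ∧
    nthK L z m ≠ outF L E 0

def AstepP (L : ℕ → Set ℕ) (E : ℕ → ℕ) (z N n : ℕ) : Prop :=
  ∃ m, islost L E z N m ∧ n ≤ rv E (nthK L z m) ∧ nthK L z m ∈ L (selF L E n)

def haslostP (L : ℕ → Set ℕ) (E : ℕ → ℕ) (z N n : ℕ) : Prop :=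
  ∃ m, islost L E z N m ∧ n ≤ rv E (nthK L z m)

def BstepP (L : ℕ → Set ℕ) (E : ℕ → ℕ) (z N n : ℕ) : Prop :=
  haslostP L E z N n ∧ ¬ AstepP L E z N n

variable {L : ℕ → Set ℕ} {E : ℕ → ℕ} {z : ℕ}

lemma Kinf_set (hinf : ∀ i, (L i).Infinite) : {x | x ∈ L z}.Infinite := hinf z

lemma rv_spec (hEr : Set.range E = L z) {x : ℕ} (hx : x ∈ L z) : E (rv E x) = x := by
  have hx' : x ∈ Set.range E := hEr ▸ hx
  obtain ⟨s, hs⟩ := hx'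
  exact Nat.sInf_mem (⟨s, hs⟩ : {s | E s = x}.Nonempty)

lemma rv_unique (hEinj : Function.Injective E) (hEr : Set.range E = L z) {x s : ℕ}
    (hx : x ∈ L z) (hs : E s = x) : s = rv E x :=
  hEinj (by rw [hs, rv_spec hEr hx])

lemma nthK_mem (hinf : ∀ i, (L i).Infinite) (m : ℕ) : nthK L z m ∈ L z :=
  Nat.nth_mem_of_infinite (Kinf_set hinf) m

lemma nthK_lt_iff (hinf : ∀ i, (L i).Infinite) {m m' : ℕ} :
    nthK L z m < nthK L z m' ↔ m < m' :=
  Nat.nth_lt_nth (Kinf_set hinf)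

lemma nthK_inj (hinf : ∀ i, (L i).Infinite) : Function.Injective (nthK L z) :=
  Nat.nth_injective (Kinf_set hinf)

/-- a value of `K` not yet revealed nor output is not in the covered set -/
lemma not_in_cov (hEinj : Function.Injective E) (hEr : Set.range E = L z)
    {u n : ℕ} (hu : u ∈ L z) (hrv : n ≤ rv E u) (hO : u ∉ OInf L E)
    (h0 : u ≠ outF L E 0) : u ∉ Sset E n ∪ Oset L E n := by
  rintro (⟨s, hs, hEs⟩ | ⟨m', hm', ho⟩)
  · have := rv_unique hEinj hEr hu hEs
    omega
  · rcases Nat.eq_zero_or_pos m' with rfl | hpos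
    · exact h0 ho.symm
    · exact hO ⟨m' - 1, by rwa [Nat.sub_add_cancel hpos]⟩

lemma outF_in_OInf (n : ℕ) (hn : 1 ≤ n) : outF L E n ∈ OInf L E :=
  ⟨n - 1, by rw [Nat.sub_add_cancel hn]⟩

lemma nstar_le_nZero {N : ℕ} : nstar L E z ≤ nZero L E z N := le_max_left _ _

lemma one_le_nZero {N : ℕ} : 1 ≤ nZero L E z N :=
  le_trans (by omega) (le_max_right _ _)

/-- the win extracted from an A-step -/
lemma astep_win (hinf : ∀ i, (L i).Infinite) (hEinj : Function.Injective E)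
    (hEr : Set.range E = L z) {N n : ℕ} (hn : nZero L E z N ≤ n)
    (hA : AstepP L E z N n) :
    ∃ m' < N, nthK L z m' = outF L E n ∧ nthK L z m' ∈ OInf L E := by
  obtain ⟨m, hm, hrv, hmem⟩ := hA
  have hu : nthK L z m ∈ L z := nthK_mem hinf m
  have hucov : nthK L z m ∉ Sset E n ∪ Oset L E n :=
    not_in_cov hEinj hEr hu hrv hm.2.1 hm.2.2.2
  have hole : outF L E n ≤ nthK L z m := by
    rw [outF_eq]
    exact Nat.sInf_le ⟨hmem, hucov⟩
  have honeN : 1 ≤ n := le_trans one_le_nZero hn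
  have hoO : outF L E n ∈ OInf L E := outF_in_OInf n honeN
  have hne : outF L E n ≠ nthK L z m := fun h => hm.2.1 (h ▸ hoO)
  have holt : outF L E n < nthK L z m := lt_of_le_of_ne hole hne
  have hoK : outF L E n ∈ L z :=
    selF_subset_K hEr (le_trans nstar_le_nZero hn)
      (outF_mem (L := L) (E := E) hinf (n := n)).1
  obtain ⟨m', hm'⟩ := Nat.subset_range_nth (p := (· ∈ L z)) hoK
  have hm'' : nthK L z m' = outF L E n := hm'
  refine ⟨m', ?_, hm'', by rw [hm'']; exact hoO⟩
  have h1 : m' < m := by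
    rw [← nthK_lt_iff (z := z) hinf, hm'']
    exact holt
  have h2 := hm.1
  omega

/-- outputs at distinct (positive) times are distinct -/
lemma outF_ne (L : ℕ → Set ℕ) (E : ℕ → ℕ) (hinf : ∀ i, (L i).Infinite) {n n' : ℕ}
    (h : n < n') : outF L E n ≠ outF L E n' := by
  intro hcontra
  have h2 := (outF_mem (L := L) (E := E) hinf (n := n')).2
  exact h2 (Or.inr ⟨n, h, hcontra⟩)

end Count

section Budget

open GenDen

/-- rank of a value in `K` -/
noncomputable def rnk (L : ℕ → Set ℕ) (z : ℕ) (x : ℕ) : ℕ :=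
  @Nat.count (· ∈ L z) (Classical.decPred _) x

variable {L : ℕ → Set ℕ} {E : ℕ → ℕ} {z : ℕ}

lemma nthK_rnk {x : ℕ} (hx : x ∈ L z) : nthK L z (rnk L z x) = x :=
  @Nat.nth_count (· ∈ L z) (Classical.decPred _) x hx

/-- the number of won ranks below `N` -/
noncomputable def wonCard (L : ℕ → Set ℕ) (E : ℕ → ℕ) (z N : ℕ) : ℕ :=
  (@Finset.filter _ (fun m => nthK L z m ∈ OInf L E) (Classical.decPred _)
    (Finset.range N)).card

lemma astep_win' (hinf : ∀ i, (L i).Infinite) (hEinj : Function.Injective E)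
    (hEr : Set.range E = L z) {N n : ℕ} (hn : nZero L E z N ≤ n)
    (hA : AstepP L E z N n) :
    rnk L z (outF L E n) < N ∧ nthK L z (rnk L z (outF L E n)) = outF L E n ∧
      outF L E n ∈ OInf L E := by
  obtain ⟨m', hm'N, hm'eq, hm'O⟩ := astep_win hinf hEinj hEr hn hA
  have hoK : outF L E n ∈ L z := by
    rw [← hm'eq]; exact nthK_mem hinf m'
  have hr : nthK L z (rnk L z (outF L E n)) = outF L E n := nthK_rnk hoK
  have : rnk L z (outF L E n) = m' := nthK_inj hinf (by rw [hr, hm'eq])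
  exact ⟨by omega, hr, hm'eq ▸ hm'O⟩

/-- A-step budget: any set of A-step times injects into the won ranks. -/
lemma abudget (hinf : ∀ i, (L i).Infinite) (hEinj : Function.Injective E)
    (hEr : Set.range E = L z) {N : ℕ} (T : Finset ℕ)
    (hT : ∀ n ∈ T, nZero L E z N ≤ n ∧ AstepP L E z N n) :
    T.card ≤ wonCard L E z N := by
  classical
  rw [wonCard]
  apply Finset.card_le_card_of_injOn (fun n => rnk L z (outF L E n))
  · intro n hn
    obtain ⟨h1, h2, h3⟩ := astep_win' hinf hEinj hEr (hT n hn).1 (hT n hn).2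
    rw [Finset.mem_coe, Finset.mem_filter]
    constructor
    · exact Finset.mem_range.mpr h1
    · convert (h2 ▸ h3)
  · intro n hn n' hn' heq
    by_contra hne
    rcases Nat.lt_or_ge n n' with h | h
    · have h1 := (astep_win' hinf hEinj hEr (hT n hn).1 (hT n hn).2).2.1
      have h2 := (astep_win' hinf hEinj hEr (hT n' hn').1 (hT n' hn').2).2.1
      exact outF_ne L E hinf h (by rw [← h1, ← h2]; exact congrArg _ heq)
    · have h : n' < n := by omega
      have h1 := (astep_win' hinf hEinj hEr (hT n hn).1 (hT n hn).2).2.1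
      have h2 := (astep_win' hinf hEinj hEr (hT n' hn').1 (hT n' hn').2).2.1
      exact outF_ne L E hinf h (by rw [← h1, ← h2]; exact congrArg _ heq.symm)

/-- facts about the selection at a B-step -/
lemma bstep_facts (hinf : ∀ i, (L i).Infinite) (hEinj : Function.Injective E)
    (hEr : Set.range E = L z) {N n : ℕ} (hn : nZero L E z N ≤ n)
    (hB : BstepP L E z N n) :
    z < selF L E n ∧ n < dth L E (selF L E n) ∧
    (¬ consF L E (selF L E n) (dth L E (selF L E n))) ∧
    (∀ m, islost L E z N m → n ≤ rv E (nthK L z m) →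
      dth L E (selF L E n) ≤ rv E (nthK L z m) + 1) := by
  obtain ⟨⟨m₀, hm₀, hrv₀⟩, hnA⟩ := hB
  have hnstar : nstar L E z ≤ n := le_trans nstar_le_nZero hn
  have hkey : ∀ m, islost L E z N m → n ≤ rv E (nthK L z m) →
      ¬ consF L E (selF L E n) (rv E (nthK L z m) + 1) := by
    intro m hm hrv hcons
    apply hnA
    refine ⟨m, hm, hrv, ?_⟩
    apply hcons
    exact ⟨rv E (nthK L z m), by omega, rv_spec hEr (nthK_mem hinf m)⟩
  have hw0 : ¬ consF L E (selF L E n) (rv E (nthK L z m₀) + 1) := hkey m₀ hm₀ hrv₀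
  have hdle : ∀ m, islost L E z N m → n ≤ rv E (nthK L z m) →
      dth L E (selF L E n) ≤ rv E (nthK L z m) + 1 :=
    fun m hm hrv => dth_le (hkey m hm hrv)
  have hdgt : n < dth L E (selF L E n) := by
    by_contra h
    push_neg at h
    exact (not_consF_of_dth_le hw0 h) (critF_selF hEr hnstar).1
  refine ⟨?_, hdgt, not_consF_dth hw0, hdle⟩
  · have hzle : z ≤ selF L E n := z_le_selF hEr hnstar
    rcases eq_or_lt_of_le hzle with h | h
    · exfalso
      apply hnA
      refine ⟨m₀, hm₀, hrv₀, ?_⟩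
      rw [← h]
      exact nthK_mem hinf m₀
    · exact h

/-- arithmetic: beyond the threshold, exponentials dominate the budget -/
lemma arith_pow {L : ℕ → Set ℕ} {E : ℕ → ℕ} {z N d a : ℕ} (ha : a ≤ N)
    (hd : nZero L E z N ≤ d) : d + a < 2 ^ d := by
  have hlog : Nat.log 2 (N + 1) + 3 ≤ d := le_trans (le_max_right _ _) hd
  have h1 : d - 1 < 2 ^ (d - 1) := Nat.lt_two_pow_self
  have h2 : 2 ^ (Nat.log 2 (N + 1) + 2) ≤ 2 ^ (d - 1) :=
    Nat.pow_le_pow_right (by omega) (by omega)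
  have h3 : N + 1 < 2 ^ (Nat.log 2 (N + 1) + 1) :=
    Nat.lt_pow_succ_log_self (by omega) _
  have h4 : 2 ^ (Nat.log 2 (N + 1) + 2) = 2 * 2 ^ (Nat.log 2 (N + 1) + 1) := by ring
  have h5 : 2 ^ (d - 1) + 2 ^ (d - 1) ≤ 2 ^ d := by
    have h6 : (2:ℕ) ^ (d - 1) * 2 ≤ 2 ^ d := by
      rw [← pow_succ]
      exact Nat.pow_le_pow_right (by omega) (by omega)
    omega
  omega

end Budget

section Chain

open GenDen

variable {L : ℕ → Set ℕ} {E : ℕ → ℕ} {z : ℕ}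

lemma wonCard_le_N {N : ℕ} : wonCard L E z N ≤ N := by
  have h := @Finset.card_filter_le ℕ (Finset.range N)
    (fun m => nthK L z m ∈ OInf L E) (Classical.decPred _)
  rw [wonCard]
  simpa using h

/-- the first B-step at or after `d` -/
lemma firstB (hinf : ∀ i, (L i).Infinite) (hEinj : Function.Injective E)
    (hEr : Set.range E = L z) {N d τ' : ℕ} (hd : nZero L E z N ≤ d) (hdτ : d ≤ τ')
    (hτ'B : BstepP L E z N τ') :
    ∃ m', d ≤ m' ∧ m' ≤ τ' ∧ m' ≤ d + wonCard L E z N ∧ BstepP L E z N m' := by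
  have hne : {n | d ≤ n ∧ BstepP L E z N n}.Nonempty := ⟨τ', hdτ, hτ'B⟩
  set m' := sInf {n | d ≤ n ∧ BstepP L E z N n} with hm'def
  have hm' : d ≤ m' ∧ BstepP L E z N m' := Nat.sInf_mem hne
  have hm'le : m' ≤ τ' :=
    Nat.sInf_le (show τ' ∈ {n | d ≤ n ∧ BstepP L E z N n} from ⟨hdτ, hτ'B⟩)
  have hA : ∀ n, d ≤ n → n < m' → AstepP L E z N n := by
    intro n h1 h2
    have hnB : ¬ BstepP L E z N n := by
      intro hB
      have hle : m' ≤ n :=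
        Nat.sInf_le (show n ∈ {n | d ≤ n ∧ BstepP L E z N n} from ⟨h1, hB⟩)
      omega
    have hhl : haslostP L E z N n := by
      obtain ⟨m₀, hm₀, hrv₀⟩ := hτ'B.1
      exact ⟨m₀, hm₀, by omega⟩
    rw [BstepP] at hnB
    push_neg at hnB
    exact hnB hhl
  have hbud : m' - d ≤ wonCard L E z N := by
    have := abudget hinf hEinj hEr (Finset.Ico d m') (fun n hn => by
      rw [Finset.mem_Ico] at hn
      exact ⟨le_trans hd hn.1, hA n hn.1 hn.2⟩)
    rwa [Nat.card_Ico] at this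
  exact ⟨m', hm'.1, hm'le, by omega, hm'.2⟩

/-- THE CHAIN LEMMA: from any B-step before a witness time `τ'`, there is a
B-step whose selection dies exactly at `τ' + 1`, with selection index no larger. -/
lemma core (hinf : ∀ i, (L i).Infinite) (hEinj : Function.Injective E)
    (hEr : Set.range E = L z) {N τ' : ℕ}
    (hτ'B : BstepP L E z N τ')
    (hτ'lost : ∃ m', islost L E z N m' ∧ rv E (nthK L z m') = τ') :
    ∀ y m, selF L E m = y → nZero L E z N ≤ m → m ≤ τ' → BstepP L E z N m →
      ∃ n, nZero L E z N ≤ n ∧ n ≤ τ' ∧ BstepP L E z N n ∧ selF L E n ≤ y ∧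
        dth L E (selF L E n) = τ' + 1 := by
  intro y
  induction y using Nat.strong_induction_on with
  | _ y ih =>
    intro m hsel hm1 hm2 hmB
    obtain ⟨mw, hmw, hmwrv⟩ := hτ'lost
    have hf := bstep_facts hinf hEinj hEr hm1 hmB
    have hdle : dth L E (selF L E m) ≤ τ' + 1 := by
      have := hf.2.2.2 mw hmw (by omega)
      omega
    rcases eq_or_lt_of_le hdle with heq | hlt
    · exact ⟨m, hm1, hm2, hmB, le_of_eq hsel, heq⟩
    · have hdth_gt : m < dth L E (selF L E m) := hf.2.1
      have hdnz : nZero L E z N ≤ dth L E (selF L E m) := by omega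
      obtain ⟨m₁, hm₁d, hm₁τ, hm₁bud, hm₁B⟩ :=
        firstB hinf hEinj hEr hdnz (by omega) hτ'B
      have hdead : ¬ consF L E (selF L E m) m₁ := not_consF_of_dth_le hf.2.2.1 hm₁d
      have hpow : m₁ < 2 ^ (dth L E (selF L E m)) :=
        lt_of_le_of_lt hm₁bud (arith_pow wonCard_le_N hdnz)
      have hm₁nz : nZero L E z N ≤ m₁ := le_trans hdnz hm₁d
      have hlog : Nat.log 2 m₁ < dth L E (selF L E m) := by
        apply Nat.log_lt_of_lt_pow ?_ hpow
        have := one_le_nZero (L := L) (E := E) (z := z) (N := N)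
        omega
      have hsel_lt : selF L E m₁ < selF L E m :=
        sel_lt_of_dead hEr (le_trans nstar_le_nZero hm₁nz) hdead hlog
      rw [hsel] at hsel_lt
      obtain ⟨n, h1, h2, h3, h4, h5⟩ :=
        ih (selF L E m₁) hsel_lt m₁ rfl hm₁nz hm₁τ hm₁B
      exact ⟨n, h1, h2, h3, le_trans h4 (le_of_lt hsel_lt), h5⟩

end Chain

section Descent

open GenDen

/-- members of the `τ`-th death cohort -/
def pmem (L : ℕ → Set ℕ) (E : ℕ → ℕ) (z N τ y : ℕ) : Prop :=
  ∃ n, nZero L E z N ≤ n ∧ n ≤ τ ∧ BstepP L E z N n ∧ selF L E n = y ∧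
    dth L E y = τ + 1

noncomputable def pival (L : ℕ → Set ℕ) (E : ℕ → ℕ) (z N τ : ℕ) : ℕ :=
  sInf {y | pmem L E z N τ y}

/-- `τ` is a witness time at scale `N` -/
def iswt (L : ℕ → Set ℕ) (E : ℕ → ℕ) (z N τ : ℕ) : Prop :=
  ∃ m, islost L E z N m ∧ rv E (nthK L z m) = τ ∧ ¬ AstepP L E z N τ

variable {L : ℕ → Set ℕ} {E : ℕ → ℕ} {z : ℕ}

lemma iswt_facts {N τ : ℕ} (h : iswt L E z N τ) :
    BstepP L E z N τ ∧ nZero L E z N ≤ τ ∧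
      (∃ m', islost L E z N m' ∧ rv E (nthK L z m') = τ) := by
  obtain ⟨m, hm, hrv, hnA⟩ := h
  exact ⟨⟨⟨m, hm, le_of_eq hrv.symm⟩, hnA⟩, hrv ▸ hm.2.2.1, ⟨m, hm, hrv⟩⟩

lemma pival_base (hinf : ∀ i, (L i).Infinite) (hEinj : Function.Injective E)
    (hEr : Set.range E = L z) {N τ : ℕ} (hwt : iswt L E z N τ) :
    pmem L E z N τ (pival L E z N τ) ∧
      pival L E z N τ ≤ Nat.log 2 (nZero L E z N + wonCard L E z N) := by
  obtain ⟨hB, hnz, hlost⟩ := iswt_facts hwt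
  obtain ⟨mlow, h1, h2, h3, h4⟩ := firstB hinf hEinj hEr (le_refl (nZero L E z N)) hnz hB
  obtain ⟨n, g1, g2, g3, g4, g5⟩ :=
    core hinf hEinj hEr hB hlost (selF L E mlow) mlow rfl h1 h2 h4
  have hmem : pmem L E z N τ (selF L E n) := ⟨n, g1, g2, g3, rfl, g5⟩
  have hne : {y | pmem L E z N τ y}.Nonempty := ⟨_, hmem⟩
  constructor
  · exact Nat.sInf_mem hne
  · calc pival L E z N τ ≤ selF L E n := Nat.sInf_le hmem
    _ ≤ selF L E mlow := g4
    _ ≤ Nat.log 2 mlow := selF_le_log L E mlow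
    _ ≤ Nat.log 2 (nZero L E z N + wonCard L E z N) := Nat.log_mono_right h3

lemma pival_gt_z (hinf : ∀ i, (L i).Infinite) (hEinj : Function.Injective E)
    (hEr : Set.range E = L z) {N τ : ℕ} (hwt : iswt L E z N τ) :
    z < pival L E z N τ := by
  obtain ⟨n, h1, _, h3, h4, _⟩ := (pival_base hinf hEinj hEr hwt).1
  rw [← h4]
  exact (bstep_facts hinf hEinj hEr h1 h3).1

lemma pival_descent (hinf : ∀ i, (L i).Infinite) (hEinj : Function.Injective E)
    (hEr : Set.range E = L z) {N τ τ' : ℕ} (hwt : iswt L E z N τ)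
    (hwt' : iswt L E z N τ') (hττ' : τ < τ') :
    pival L E z N τ' < pival L E z N τ := by
  obtain ⟨hB', hnz', hlost'⟩ := iswt_facts hwt'
  obtain ⟨hB, hnz, hlost⟩ := iswt_facts hwt
  obtain ⟨np, k1, k2, k3, k4, k5⟩ := (pival_base hinf hEinj hEr hwt).1
  -- death witness for p := pival τ
  have hdw : ¬ consF L E (pival L E z N τ) (dth L E (pival L E z N τ)) := by
    have := (bstep_facts hinf hEinj hEr k1 k3).2.2.1
    rwa [k4] at this
  obtain ⟨m₀, h1, h2, h3, h4⟩ :=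
    firstB hinf hEinj hEr (le_trans hnz (Nat.le_succ τ)) (by omega) hB'
  have hdead : ¬ consF L E (pival L E z N τ) m₀ :=
    not_consF_of_dth_le hdw (by omega)
  have hm₀nz : nZero L E z N ≤ m₀ := le_trans (le_trans hnz (Nat.le_succ τ)) h1
  have hpow : m₀ < 2 ^ (τ + 1) := by
    calc m₀ ≤ (τ + 1) + wonCard L E z N := h3
    _ < 2 ^ (τ + 1) := arith_pow wonCard_le_N (le_trans hnz (Nat.le_succ τ))
  have hlog : Nat.log 2 m₀ < dth L E (pival L E z N τ) := by
    rw [k5]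
    apply Nat.log_lt_of_lt_pow ?_ hpow
    have := one_le_nZero (L := L) (E := E) (z := z) (N := N)
    omega
  have hsel_lt : selF L E m₀ < pival L E z N τ :=
    sel_lt_of_dead hEr (le_trans nstar_le_nZero hm₀nz) hdead hlog
  obtain ⟨n, g1, g2, g3, g4, g5⟩ :=
    core hinf hEinj hEr hB' hlost' (selF L E m₀) m₀ rfl hm₀nz h2 h4
  calc pival L E z N τ' ≤ selF L E n := Nat.sInf_le ⟨n, g1, g2, g3, rfl, g5⟩
  _ ≤ selF L E m₀ := g4
  _ < pival L E z N τ := hsel_lt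

end Descent

section Master

open GenDen

variable {L : ℕ → Set ℕ} {E : ℕ → ℕ} {z : ℕ}

lemma rvnth_injOn (hinf : ∀ i, (L i).Infinite) (hEinj : Function.Injective E)
    (hEr : Set.range E = L z) {m m' : ℕ}
    (h : rv E (nthK L z m) = rv E (nthK L z m')) : m = m' := by
  apply nthK_inj (z := z) hinf
  have h1 := rv_spec hEr (nthK_mem (z := z) hinf m)
  have h2 := rv_spec hEr (nthK_mem (z := z) hinf m')
  rw [← h1, ← h2, h]

theorem master_count (hinf : ∀ i, (L i).Infinite) (hEinj : Function.Injective E)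
    (hEr : Set.range E = L z) (N : ℕ) :
    N ≤ 2 * wonCard L E z N +
      Nat.log 2 (nZero L E z N + wonCard L E z N) + nZero L E z N + 1 := by
  classical
  set W := wonCard L E z N with hW
  set n0 := nZero L E z N with hn0
  set H := Nat.log 2 (n0 + W) with hH
  set LostF := (Finset.range N).filter (fun m => nthK L z m ∉ OInf L E) with hLostF
  have hsplit : W + LostF.card = N := by
    rw [hW, wonCard, hLostF]
    rw [show (@Finset.filter _ (fun m => nthK L z m ∈ OInf L E) (Classical.decPred _)
      (Finset.range N)) = (Finset.range N).filter (fun m => nthK L z m ∈ OInf L E) by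
        congr!]
    rw [Finset.card_filter_add_card_filter_not
      (p := fun m => nthK L z m ∈ OInf L E)]
    exact Finset.card_range N
  set F1 := (Finset.range N).filter (fun m => rv E (nthK L z m) < n0) with hF1
  set F2 := (Finset.range N).filter (fun m => nthK L z m = outF L E 0) with hF2
  set F3 := (Finset.range N).filter
    (fun m => islost L E z N m ∧ AstepP L E z N (rv E (nthK L z m))) with hF3
  set F4 := (Finset.range N).filter
    (fun m => islost L E z N m ∧ ¬ AstepP L E z N (rv E (nthK L z m))) with hF4
  have hsub : LostF ⊆ F1 ∪ F2 ∪ F3 ∪ F4 := by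
    intro m hm
    rw [hLostF, Finset.mem_filter] at hm
    obtain ⟨hmN, hmO⟩ := hm
    simp only [Finset.mem_union, hF1, hF2, hF3, hF4, Finset.mem_filter]
    by_cases h1 : rv E (nthK L z m) < n0
    · exact Or.inl (Or.inl (Or.inl ⟨hmN, h1⟩))
    · by_cases h2 : nthK L z m = outF L E 0
      · exact Or.inl (Or.inl (Or.inr ⟨hmN, h2⟩))
      · have hlost : islost L E z N m :=
          ⟨Finset.mem_range.mp hmN, hmO, by omega, h2⟩
        by_cases h3 : AstepP L E z N (rv E (nthK L z m))
        · exact Or.inl (Or.inr ⟨hmN, hlost, h3⟩)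
        · exact Or.inr ⟨hmN, hlost, h3⟩
  have hcard1 : F1.card ≤ n0 := by
    have hstep : F1.card ≤ (Finset.range n0).card := by
      apply Finset.card_le_card_of_injOn (fun m => rv E (nthK L z m))
      · intro m hm
        rw [Finset.mem_coe, Finset.mem_filter] at hm
        exact Finset.mem_range.mpr hm.2
      · intro m _ m' _ h
        exact rvnth_injOn hinf hEinj hEr h
    simpa using hstep
  have hcard2 : F2.card ≤ 1 := by
    rw [Finset.card_le_one]
    intro a ha b hb
    rw [hF2, Finset.mem_filter] at ha hb
    exact nthK_inj (z := z) hinf (by rw [ha.2, hb.2])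
  have hcard3 : F3.card ≤ W := by
    have himg : (F3.image (fun m => rv E (nthK L z m))).card = F3.card :=
      Finset.card_image_of_injOn (fun m _ m' _ h => rvnth_injOn hinf hEinj hEr h)
    rw [← himg]
    apply abudget hinf hEinj hEr
    intro n hn
    rw [Finset.mem_image] at hn
    obtain ⟨m, hm, rfl⟩ := hn
    rw [hF3, Finset.mem_filter] at hm
    exact ⟨hm.2.1.2.2.1, hm.2.2⟩
  have hcard4 : F4.card ≤ H := by
    have himg : (F4.image (fun m => rv E (nthK L z m))).card = F4.card :=
      Finset.card_image_of_injOn (fun m _ m' _ h => rvnth_injOn hinf hEinj hEr h)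
    rw [← himg]
    have hwt : ∀ τ ∈ F4.image (fun m => rv E (nthK L z m)), iswt L E z N τ := by
      intro τ hτ
      rw [Finset.mem_image] at hτ
      obtain ⟨m, hm, rfl⟩ := hτ
      rw [hF4, Finset.mem_filter] at hm
      exact ⟨m, hm.2.1, rfl, hm.2.2⟩
    have hstep : (F4.image (fun m => rv E (nthK L z m))).card ≤
        (Finset.Icc (z + 1) H).card := by
      apply Finset.card_le_card_of_injOn (fun τ => pival L E z N τ)
      · intro τ hτ
        rw [Finset.mem_coe, Finset.mem_Icc]
        exact ⟨pival_gt_z hinf hEinj hEr (hwt τ hτ),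
          (pival_base hinf hEinj hEr (hwt τ hτ)).2⟩
      · intro τ hτ τ' hτ' heq
        by_contra hne
        rcases Nat.lt_or_ge τ τ' with h | h
        · exact absurd heq
            (ne_of_gt (pival_descent hinf hEinj hEr (hwt τ hτ) (hwt τ' hτ') h))
        · have h' : τ' < τ := by omega
          exact absurd heq
            (ne_of_lt (pival_descent hinf hEinj hEr (hwt τ' hτ') (hwt τ hτ) h'))
    calc (F4.image (fun m => rv E (nthK L z m))).card ≤ (Finset.Icc (z + 1) H).card :=
      hstep
    _ ≤ H := by
      rw [Nat.card_Icc]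
      omega
  have hunion : LostF.card ≤ F1.card + F2.card + F3.card + F4.card := by
    calc LostF.card ≤ (F1 ∪ F2 ∪ F3 ∪ F4).card := Finset.card_le_card hsub
    _ ≤ (F1 ∪ F2 ∪ F3).card + F4.card := Finset.card_union_le _ _
    _ ≤ (F1 ∪ F2).card + F3.card + F4.card := by
        have := Finset.card_union_le (F1 ∪ F2) F3
        omega
    _ ≤ F1.card + F2.card + F3.card + F4.card := by
        have := Finset.card_union_le F1 F2
        omega
  omega

end Master

section Final

open GenDen Filter

variable {L : ℕ → Set ℕ} {E : ℕ → ℕ} {z : ℕ}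

lemma lin_le_exp : ∀ l, 12 ≤ l → 64 * l ≤ 2 ^ l := by
  intro l hl
  induction l, hl using Nat.le_induction with
  | base => norm_num
  | succ n hn ih =>
    have h0 : (64:ℕ) ≤ 64 * n := by omega
    have h1 : (64:ℕ) ≤ 2 ^ n := le_trans h0 ih
    have h2 : (2:ℕ) ^ (n + 1) = 2 ^ n + 2 ^ n := by ring
    omega

lemma eventually_won (hinf : ∀ i, (L i).Infinite) (hEinj : Function.Injective E)
    (hEr : Set.range E = L z) :
    ∀ N, 128 * nstar L E z + 8192 ≤ N → N ≤ 4 * wonCard L E z N := by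
  intro N hN
  have hmc := master_count hinf hEinj hEr N
  set W := wonCard L E z N with hW
  set l := Nat.log 2 (N + 1) with hl
  have hl13 : 13 ≤ l := by
    rw [hl]
    have h8 : (2:ℕ) ^ 13 ≤ N + 1 := by
      calc (2:ℕ) ^ 13 = 8192 := by norm_num
      _ ≤ N + 1 := by omega
    exact (Nat.le_log_iff_pow_le (by norm_num) (by omega)).mpr h8
  have hexp : 2 ^ l ≤ N + 1 := Nat.pow_log_le_self 2 (by omega)
  have hlin : 64 * l ≤ N + 1 := le_trans (lin_le_exp l (by omega)) hexp
  have hn0 : nZero L E z N ≤ nstar L E z + l + 3 := by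
    rw [nZero]
    omega
  have hlogbig : Nat.log 2 (nZero L E z N + W) ≤ 2 * l + 1 := by
    have hWN : W ≤ N := wonCard_le_N
    have hlN : l ≤ N := by omega
    have hX : nZero L E z N + W ≤ (N + 1) * (N + 1) := by
      have h3 : 3 * N + 4 ≤ (N + 1) * (N + 1) := by nlinarith
      omega
    have hsq : (N + 1) * (N + 1) < 2 ^ (2 * l + 2) := by
      have h1 : N + 1 < 2 ^ (l + 1) := Nat.lt_pow_succ_log_self (by norm_num) _
      calc (N + 1) * (N + 1) < 2 ^ (l + 1) * 2 ^ (l + 1) :=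
        mul_lt_mul'' h1 h1 (Nat.zero_le _) (Nat.zero_le _)
      _ = 2 ^ (2 * l + 2) := by rw [← pow_add]; congr 1; omega
    have hlt := Nat.log_lt_of_lt_pow
      (show (N + 1) * (N + 1) ≠ 0 by positivity) hsq
    have hmono : Nat.log 2 (nZero L E z N + W) ≤ Nat.log 2 ((N + 1) * (N + 1)) :=
      Nat.log_mono_right hX
    omega
  -- master: N ≤ 2W + log(n0+W) + n0 + 1 ≤ 2W + (2l+1) + nstar + l + 3 + 1
  have hkey : N ≤ 2 * W + 3 * l + nstar L E z + 5 := by omega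
  omega

lemma won_eq_ncard (hinf : ∀ i, (L i).Infinite) (N : ℕ) :
    (Set.ncard {n : ℕ | n < N ∧ Nat.nth (· ∈ L z) n ∈ (OInf L E ∩ L z)}) =
      wonCard L E z N := by
  classical
  have hset : {n : ℕ | n < N ∧ Nat.nth (· ∈ L z) n ∈ (OInf L E ∩ L z)} =
      ↑((Finset.range N).filter (fun m => nthK L z m ∈ OInf L E)) := by
    ext m
    simp only [Set.mem_setOf_eq, Finset.coe_filter, Finset.mem_range, Set.mem_inter_iff]
    constructor
    · rintro ⟨h1, h2, _⟩
      exact ⟨h1, h2⟩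
    · rintro ⟨h1, h2⟩
      exact ⟨h1, h2, nthK_mem hinf m⟩
  rw [hset, Set.ncard_coe_finset, wonCard]

lemma density_part (hinf : ∀ i, (L i).Infinite) (hEinj : Function.Injective E)
    (hEr : Set.range E = L z) :
    (1 / 8 : ℝ) ≤ lowerDensity (OInf L E ∩ L z) (L z) := by
  rw [lowerDensity]
  apply Filter.le_liminf_of_le
  · refine Filter.isCoboundedUnder_ge_of_le Filter.atTop (x := 1) (fun N => ?_)
    rcases Nat.eq_zero_or_pos N with rfl | hN
    · simp
    · rw [won_eq_ncard hinf]
      rw [div_le_one (by exact_mod_cast hN)]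
      exact_mod_cast wonCard_le_N
  · rw [Filter.eventually_atTop]
    refine ⟨128 * nstar L E z + 8192, fun N hN => ?_⟩
    have hNpos : (0:ℝ) < N := by
      have : 0 < N := by omega
      exact_mod_cast this
    rw [won_eq_ncard hinf, div_le_div_iff₀ (by norm_num) hNpos]
    have h4 := eventually_won hinf hEinj hEr N hN
    have hcast : (N:ℝ) ≤ 4 * (wonCard L E z N : ℝ) := by exact_mod_cast h4
    have hnn : (0:ℝ) ≤ (wonCard L E z N : ℝ) := Nat.cast_nonneg _
    nlinarith [hcast, hnn]

end Final

/-- There is a uniform element-based generation algorithm achieving element-based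
generation in the limit on every instance, whose output set
`O(E,f) = {o_t : t} ∩ K` has lower density at least `1/8` in `K`. -/
theorem stmt11 :
    ∃ f : (ℕ → Set ℕ) → List ℕ → ℕ,
      ∀ (L : ℕ → Set ℕ), (∀ i, (L i).Infinite) →
        ∀ (z : ℕ) (E : ℕ → ℕ), IsEnum E (L z) →
          (∃ tstar : ℕ, ∀ t ≥ tstar,
              f L (epref E t) ∈ L z ∧ ∀ s ≤ t, E s ≠ f L (epref E t)) ∧
          (1 / 8 : ℝ) ≤
            lowerDensity ({w : ℕ | ∃ t : ℕ, f L (epref E t) = w} ∩ L z) (L z) := by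
  refine ⟨fun L p => GenDen.gen L p, fun L hinf z E hE => ⟨validity_part L hinf z E hE, ?_⟩⟩
  have hset : {w : ℕ | ∃ t : ℕ, GenDen.gen L (epref E t) = w} = OInf L E := by
    ext w
    constructor
    · rintro ⟨t, rfl⟩
      exact ⟨t, rfl⟩
    · rintro ⟨t, rfl⟩
      exact ⟨t, rfl⟩
  rw [hset]
  exact density_part hinf hE.1 hE.2
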